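/- For any cyclic word w and any cyclically reduced word v with (v) = w, the forward T-orbit {T^n v^∞ : n ≥ 0} of v^∞ equals A(w) and is a finite set of cardinality ||w_0||, where w_0 is the root of w (i.e., w = w_0^s with s maximal). -/

import Mathlib

open Finset
noncomputable section
attribute [local instance] Classical.propDecidable

abbrev Letter (k : ℕ) := Fin k × Bool

def linv {k : ℕ} (x : Letter k) : Letter k := (x.1, !x.2)

/-- `w` is a freely reduced word: no letter is followed by its inverse. -/
def Reduced {k : ℕ} (w : List (Letter k)) : Prop :=
  ∀ i < w.length, w[i + 1]? ≠ (w[i]?).map linv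

/-- `w` is cyclically reduced. -/
def CyclRed {k : ℕ} (w : List (Letter k)) : Prop := Reduced (w ++ w)

/-- `w` and `w'` define the same cyclic word. -/
def CyclEq {k : ℕ} (w w' : List (Letter k)) : Prop := ∃ n, w' = w.rotate n

/-- the word `u` occurs in the cyclic word of `w` starting at position `i` (with wrap-around). -/
def occursAt {k : ℕ} (w u : List (Letter k)) (i : ℕ) : Prop :=
  ∀ j < u.length, w[(i + j) % w.length]? = u[j]?

/-- the number `n_w(u)` of cyclic occurrences of `u` in the cyclic word `w`. -/
def cyclCount {k : ℕ} (w u : List (Letter k)) : ℕ :=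
  ((Finset.range w.length).filter (occursAt w u)).card

/-- the frequency `f_w(u) = n_w(u)/‖w‖`. -/
def freq {k : ℕ} (w u : List (Letter k)) : ℚ := (cyclCount w u : ℚ) / (w.length : ℚ)

/-- the boundary `∂F`: semi-infinite freely reduced words. -/
def Boundary (k : ℕ) := {f : ℕ → Letter k // ∀ n, f (n + 1) ≠ linv (f n)}

instance (k : ℕ) : TopologicalSpace (Boundary k) :=
  inferInstanceAs (TopologicalSpace {f : ℕ → Letter k // ∀ n, f (n + 1) ≠ linv (f n)})

instance (k : ℕ) : MeasurableSpace (Boundary k) := borel _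
instance (k : ℕ) : BorelSpace (Boundary k) := ⟨rfl⟩

/-- the shift map `T`, erasing the first letter. -/
def shiftT {k : ℕ} (ξ : Boundary k) : Boundary k := ⟨fun n => ξ.1 (n + 1), fun n => ξ.2 (n + 1)⟩

/-- the cylinder set of semi-infinite reduced words with prefix `v`. -/
def Cyl {k : ℕ} (v : List (Letter k)) : Set (Boundary k) := {ξ | ∀ i < v.length, v[i]? = some (ξ.1 i)}

/-- `A(w) = {v^∞ : (v) = w}`. -/
def Aset {k : ℕ} (w : List (Letter k)) : Set (Boundary k) :=
  {ξ | ∃ v, CyclEq w v ∧ ∀ n, v[n % v.length]? = some (ξ.1 n)}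


lemma my_flatten_replicate_getElem? {α : Type*} (s : ℕ) (z : List α) (i : ℕ)
    (hi : i < s * z.length) : ((List.replicate s z).flatten)[i]? = z[i % z.length]? := by
  induction s generalizing i with
  | zero => simp at hi
  | succ t ih =>
    rw [List.replicate_succ, List.flatten_cons]
    by_cases h : i < z.length
    · rw [List.getElem?_append, if_pos h, Nat.mod_eq_of_lt h]
    · push_neg at h
      rw [List.getElem?_append_right h]
      have hb : i - z.length < t * z.length := by
        have hsm : (t+1) * z.length = t * z.length + z.length := by ring
        omega
      rw [ih _ hb]
      congr 1
      conv_rhs => rw [show i = (i - z.length) + z.length from by omega]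
      rw [Nat.add_mod_right]

lemma my_rotate_getElem?_mod {α : Type*} (l : List α) (hl : l ≠ []) (n i : ℕ) :
    (l.rotate n)[i % l.length]? = l[(i + n) % l.length]? := by
  have hL : 0 < l.length := List.length_pos_iff.mpr hl
  have h1 : i % l.length < (l.rotate n).length := by
    rw [List.length_rotate]; exact Nat.mod_lt _ hL
  have h2 : (i + n) % l.length < l.length := Nat.mod_lt _ hL
  rw [List.getElem?_eq_getElem h1, List.getElem?_eq_getElem h2]
  congr 1
  rw [List.getElem_rotate]
  congr 1
  exact Nat.mod_add_mod i l.length n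

lemma my_shiftT_iterate_apply {k : ℕ} (ξ : Boundary k) (n m : ℕ) :
    (shiftT^[n] ξ).1 m = ξ.1 (m + n) := by
  induction n generalizing ξ with
  | zero => rfl
  | succ t ih =>
    rw [Function.iterate_succ_apply, ih (shiftT ξ)]
    rfl

lemma my_period_mul {α : Type*} (w : List α) (d : ℕ)
    (hPd : ∀ n, w[n % w.length]? = w[(n + d) % w.length]?) :
    ∀ c n, w[n % w.length]? = w[(n + c * d) % w.length]? := by
  intro c
  induction c with
  | zero => simp
  | succ t ih =>
    intro n
    rw [ih n, hPd (n + t * d)]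
    have he : n + t * d + d = n + (t + 1) * d := by ring
    rw [he]

theorem stmt10 (k : ℕ) (hk : 2 ≤ k) (w v : List (Letter k)) (hw : CyclRed w) (hwne : w ≠ [])
    (hv : CyclEq w v) (ξ : Boundary k) (hξ : ∀ n, v[n % v.length]? = some (ξ.1 n))
    (w₀ : List (Letter k)) (s : ℕ) (hs : w = (List.replicate s w₀).flatten)
    (hmax : ∀ (z : List (Letter k)) (t : ℕ), w = (List.replicate t z).flatten → t ≤ s) :
    {η | ∃ n : ℕ, η = shiftT^[n] ξ} = Aset w ∧ (Aset w).ncard = w₀.length := by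
  obtain ⟨r, hr⟩ := hv
  set L := w.length with hLdef
  set p := w₀.length with hpdef
  have hLpos : 0 < L := List.length_pos_iff.mpr hwne
  have hs1 : 1 ≤ s := hmax w 1 (by simp)
  have hL : L = s * p := by
    rw [hLdef, hs]; simp [List.length_flatten, List.map_replicate, List.sum_replicate, smul_eq_mul]
    exact Or.inl rfl
  have hppos : 0 < p := by
    rcases Nat.eq_zero_or_pos p with h | h
    · rw [h, mul_zero] at hL; omega
    · exact h
  have hpL : p ∣ L := ⟨s, by rw [hL]; ring⟩
  have hw0 : ∀ i < L, w[i]? = w₀[i % p]? := by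
    intro i hi
    conv_lhs => rw [hs]
    exact my_flatten_replicate_getElem? s w₀ i (hL ▸ hi)
  have hW : ∀ m, w[m % L]? = w₀[m % p]? := by
    intro m
    rw [hw0 _ (Nat.mod_lt _ hLpos), Nat.mod_mod_of_dvd m hpL]
  have huξ : ∀ n, some (ξ.1 n) = w[(n + r) % L]? := by
    intro n
    have h := hξ n
    rw [hr, List.length_rotate, my_rotate_getElem?_mod w hwne r n] at h
    exact h.symm
  -- key: minimal period
  have key : ∀ a b : ℕ, a < b → b < p → shiftT^[a] ξ ≠ shiftT^[b] ξ := by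
    intro a b hab hbp heq
    set d := b - a with hddef
    have hd0 : 0 < d := by omega
    have hdp : d < p := by omega
    have hstep : ∀ m : ℕ, w[(m + a + r) % L]? = w[(m + b + r) % L]? := by
      intro m
      have h1 := congrArg (fun η : Boundary k => η.1 m) heq
      simp only [my_shiftT_iterate_apply] at h1
      have e1 := huξ (m + a)
      have e2 := huξ (m + b)
      rw [h1] at e1
      rw [show m + a + r = m + a + r from rfl]
      exact e1.symm.trans e2
    have hPd : ∀ n, w[n % L]? = w[(n + d) % L]? := by
      intro n
      have h := hstep (n + (a + r) * (L - 1))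
      have hmul : (a + r) * (L - 1) + (a + r) = (a + r) * L := by
        rw [← Nat.mul_succ]; congr 1; omega
      have e1 : n + (a + r) * (L - 1) + a + r = n + (a + r) * L := by omega
      have e2 : n + (a + r) * (L - 1) + b + r = (n + d) + (a + r) * L := by omega
      rw [e1, e2, Nat.add_mul_mod_self_right, Nat.add_mul_mod_self_right] at h
      exact h
    set g := Nat.gcd d L with hgdef
    have hgd : g ≤ d := Nat.le_of_dvd hd0 (Nat.gcd_dvd_left d L)
    have hgL : g ∣ L := Nat.gcd_dvd_right d L
    have hg0 : 0 < g := Nat.gcd_pos_of_pos_left L hd0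
    have hgp : g < p := lt_of_le_of_lt hgd hdp
    have hgleL : g ≤ L := Nat.le_of_dvd hLpos hgL
    -- find c with (c * d) % L = g % L
    obtain ⟨c, hcd⟩ : ∃ c : ℕ, (c * d) % L = g % L := by
      set x := Nat.gcdA d L with hx
      set y := Nat.gcdB d L with hy
      have hbez : (g : ℤ) = d * x + L * y := Nat.gcd_eq_gcd_ab d L
      refine ⟨(x % (L : ℤ)).toNat, ?_⟩
      have hLne : (L : ℤ) ≠ 0 := by exact_mod_cast hLpos.ne'
      have hc : ((x % (L : ℤ)).toNat : ℤ) = x % L := Int.toNat_of_nonneg (Int.emod_nonneg x hLne)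
      have hmod : (((x % (L : ℤ)).toNat * d : ℕ) : ℤ) % L = (g : ℤ) % L := by
        push_cast
        rw [hc]
        have h1 : (x % (L:ℤ)) * d % L = x * d % L := by
          rw [Int.mul_emod, Int.emod_emod_of_dvd x dvd_rfl, ← Int.mul_emod]
        rw [h1]
        have h2 : x * (d:ℤ) = g - L * y := by linarith [hbez]
        rw [h2, Int.sub_emod, Int.mul_emod_right]
        simp
      have := hmod
      rw [← Int.natCast_mod, ← Int.natCast_mod g L] at this
      exact_mod_cast this
    have hPg : ∀ n, w[n % L]? = w[(n + g) % L]? := by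
      intro n
      rw [my_period_mul w d hPd c n]
      rw [Nat.add_mod n (c * d), Nat.add_mod n g, hcd]
    have hmodg : ∀ i, w[i % L]? = w[(i % g) % L]? := by
      intro i
      conv_lhs => rw [show i = i % g + i / g * g from (Nat.mod_add_div' i g).symm]
      exact (my_period_mul w g hPg (i / g) (i % g)).symm
    have htake : (w.take g).length = g := by
      rw [List.length_take]; omega
    have weq : w = (List.replicate (L / g) (w.take g)).flatten := by
      apply List.ext_getElem?
      intro i
      have hflen : ((List.replicate (L / g) (w.take g)).flatten).length = L := by
        simp [List.length_flatten, List.map_replicate, List.sum_replicate, smul_eq_mul, htake]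
        exact Nat.div_mul_cancel hgL
      by_cases hi : i < L
      · rw [my_flatten_replicate_getElem? _ _ i (by rw [htake, Nat.div_mul_cancel hgL]; exact hi)]
        rw [htake, List.getElem?_take, if_pos (Nat.mod_lt _ hg0)]
        have h1 := hmodg i
        rw [Nat.mod_eq_of_lt hi, Nat.mod_eq_of_lt (lt_of_lt_of_le (Nat.mod_lt _ hg0) hgleL)] at h1
        exact h1
      · rw [List.getElem?_eq_none (by omega), List.getElem?_eq_none (by rw [hflen]; omega)]
    have hle := hmax (w.take g) (L / g) weq
    have hLg : L / g * g = L := Nat.div_mul_cancel hgL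
    have : L < L := by
      calc L = L / g * g := hLg.symm
        _ ≤ s * g := Nat.mul_le_mul_right g hle
        _ < s * p := mul_lt_mul_of_pos_left hgp (by omega)
        _ = L := hL.symm
    omega
  -- period p
  have hperiodp : shiftT^[p] ξ = ξ := by
    apply Subtype.ext
    funext m
    rw [my_shiftT_iterate_apply]
    apply Option.some_injective
    rw [huξ (m + p), huξ m, hW, hW]
    congr 1
    rw [show m + p + r = (m + r) + p from by omega, Nat.add_mod_right]
  have hfix : ∀ c, shiftT^[c * p] ξ = ξ := by
    intro c
    induction c with
    | zero => rw [Nat.zero_mul]; rfl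
    | succ t ih =>
      rw [show (t + 1) * p = t * p + p from by ring, Function.iterate_add_apply, hperiodp, ih]
  have hmodp : ∀ n, shiftT^[n] ξ = shiftT^[n % p] ξ := by
    intro n
    conv_lhs => rw [show n = n % p + n / p * p from (Nat.mod_add_div' n p).symm]
    rw [Function.iterate_add_apply, hfix]
  -- set equality
  have hset : {η | ∃ n : ℕ, η = shiftT^[n] ξ} = Aset w := by
    ext η
    simp only [Set.mem_setOf_eq, Aset]
    constructor
    · rintro ⟨n, rfl⟩
      refine ⟨w.rotate (r + n), ⟨r + n, rfl⟩, ?_⟩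
      intro m
      rw [List.length_rotate, my_rotate_getElem?_mod w hwne (r + n) m,
        my_shiftT_iterate_apply]
      rw [show m + (r + n) = m + n + r from by omega]
      exact (huξ (m + n)).symm
    · rintro ⟨v', ⟨a, rfl⟩, hv'⟩
      refine ⟨a + r * (L - 1), ?_⟩
      apply Subtype.ext
      funext m
      apply Option.some_injective
      have h1 : some (η.1 m) = w[(m + a) % L]? := by
        rw [← hv' m, List.length_rotate, my_rotate_getElem?_mod w hwne a m]
      have h2 : some ((shiftT^[a + r * (L - 1)] ξ).1 m) = w[(m + (a + r * (L - 1)) + r) % L]? := by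
        rw [my_shiftT_iterate_apply]
        exact huξ (m + (a + r * (L - 1)))
      have hmul : r * (L - 1) + r = r * L := by
        rw [← Nat.mul_succ]; congr 1; omega
      have h3 : (m + (a + r * (L - 1)) + r) % L = (m + a) % L := by
        rw [show m + (a + r * (L - 1)) + r = (m + a) + r * L from by omega,
          Nat.add_mul_mod_self_right]
      rw [h1, h2, h3]
  refine ⟨hset, ?_⟩
  have hAfin : Aset w = ↑((Finset.range p).image fun n => shiftT^[n] ξ) := by
    rw [← hset]
    ext η
    simp only [Set.mem_setOf_eq, Finset.coe_image, Set.mem_image, Finset.mem_coe,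
      Finset.mem_range]
    constructor
    · rintro ⟨n, rfl⟩
      exact ⟨n % p, Nat.mod_lt _ hppos, (hmodp n).symm⟩
    · rintro ⟨n, hn, rfl⟩
      exact ⟨n, rfl⟩
  rw [hAfin, Set.ncard_coe_finset, Finset.card_image_of_injOn, Finset.card_range]
  intro a ha b hb hab
  simp only [Finset.coe_range, Set.mem_Iio] at ha hb
  by_contra hne
  rcases Nat.lt_or_ge a b with h | h
  · exact key a b h hb hab
  · exact key b a (by omega) ha hab.symm

end
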